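/- Let x, y ∈ ℝ³ satisfy ‖x‖ = 1, ⟨x, y⟩ = 0, and ‖y‖ < √2, and define v = (1 − ‖y‖²/2)·x + √(1 − ‖y‖²/4)·y and w = (1 − ‖y‖²/2)·x − √(1 − ‖y‖²/4)·y. Then ‖v‖ = ‖w‖ = 1, (v + w)·e₁ = (2 − ‖y‖²)·x₁, and v·w = 1 − 2‖y‖² + ‖y‖⁴/2. Consequently, ((v + w)·e₁ = 0 and v·w = −1/2) if and only if (x₁ = 0 and ‖y‖ = 1). -/

import Mathlib

open scoped RealInnerProductSpace

/-- The first standard basis vector `e₁ = (1,0,0)` of `ℝ³`. -/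
noncomputable def e₁ : EuclideanSpace ℝ (Fin 3) := !₂[1, 0, 0]

set_option maxHeartbeats 1000000 in
/-- The computation proving Proposition 4.1: for `(x, y)` in the radius-`√2` disk bundle
in `TS²`, the pair `v = (1 − ‖y‖²/2)x + √(1 − ‖y‖²/4)y`,
`w = (1 − ‖y‖²/2)x − √(1 − ‖y‖²/4)y` consists of unit vectors with
`(v + w)·e₁ = (2 − ‖y‖²)x₁` and `v·w = 1 − 2‖y‖² + ‖y‖⁴/2`; consequently
`(v + w)·e₁ = 0` and `v·w = −1/2` iff `x₁ = 0` and `‖y‖ = 1`. -/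
theorem theta_delta_circle_bundle (x y : EuclideanSpace ℝ (Fin 3))
    (hx : ‖x‖ = 1) (hxy : ⟪x, y⟫ = 0) (hy : ‖y‖ < Real.sqrt 2)
    (v w : EuclideanSpace ℝ (Fin 3))
    (hv : v = (1 - ‖y‖ ^ 2 / 2) • x + Real.sqrt (1 - ‖y‖ ^ 2 / 4) • y)
    (hw : w = (1 - ‖y‖ ^ 2 / 2) • x - Real.sqrt (1 - ‖y‖ ^ 2 / 4) • y) :
    ‖v‖ = 1 ∧ ‖w‖ = 1 ∧
    ⟪v + w, e₁⟫ = (2 - ‖y‖ ^ 2) * x 0 ∧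
    ⟪v, w⟫ = 1 - 2 * ‖y‖ ^ 2 + ‖y‖ ^ 4 / 2 ∧
    ((⟪v + w, e₁⟫ = 0 ∧ ⟪v, w⟫ = -(1 / 2)) ↔ (x 0 = 0 ∧ ‖y‖ = 1)) := by
  set t : ℝ := ‖y‖ ^ 2 with ht
  have hy0 : (0:ℝ) ≤ ‖y‖ := norm_nonneg y
  have ht2 : t < 2 := by
    have : ‖y‖ ^ 2 < Real.sqrt 2 ^ 2 := by
      exact pow_lt_pow_left₀ hy hy0 two_ne_zero
    simpa [Real.sq_sqrt (by norm_num : (0:ℝ) ≤ 2)] using this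
  have ht0 : 0 ≤ t := sq_nonneg _
  have hs : (0:ℝ) ≤ 1 - t / 4 := by linarith
  have hs2 : Real.sqrt (1 - t / 4) ^ 2 = 1 - t / 4 := Real.sq_sqrt hs
  have hxx : ⟪x, x⟫ = 1 := by
    rw [real_inner_self_eq_norm_sq, hx]; norm_num
  have hyy : ⟪y, y⟫ = t := real_inner_self_eq_norm_sq y
  have hyx : ⟪y, x⟫ = 0 := by rw [real_inner_comm]; exact hxy
  have hvw : ⟪v, w⟫ = 1 - 2 * t + t ^ 2 / 2 := by
    rw [hv, hw]
    simp only [inner_add_left, inner_sub_right, inner_smul_left, inner_smul_right,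
      RCLike.conj_to_real, hxx, hxy, hyx, hyy]
    nlinarith [hs2]
  have hvv : ⟪v, v⟫ = 1 := by
    rw [hv]
    simp only [inner_add_left, inner_add_right, inner_smul_left, inner_smul_right,
      RCLike.conj_to_real, hxx, hxy, hyx, hyy]
    nlinarith [hs2]
  have hww : ⟪w, w⟫ = 1 := by
    rw [hw]
    simp only [inner_sub_left, inner_sub_right, inner_smul_left, inner_smul_right,
      RCLike.conj_to_real, hxx, hxy, hyx, hyy]
    nlinarith [hs2]
  have hnv : ‖v‖ = 1 := by
    have := real_inner_self_eq_norm_sq v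
    nlinarith [norm_nonneg v]
  have hnw : ‖w‖ = 1 := by
    have := real_inner_self_eq_norm_sq w
    nlinarith [norm_nonneg w]
  have hxe : ⟪x, e₁⟫ = x 0 := by
    simp [e₁, PiLp.inner_apply, Fin.sum_univ_three]
  have hye : ⟪y, e₁⟫ = y 0 := by
    simp [e₁, PiLp.inner_apply, Fin.sum_univ_three]
  have hvwsum : v + w = (2 - t) • x := by
    rw [hv, hw]
    module
  have hE : ⟪v + w, e₁⟫ = (2 - t) * x 0 := by
    rw [hvwsum, inner_smul_left, RCLike.conj_to_real, hxe]
  refine ⟨hnv, hnw, hE, by rw [hvw, ht]; ring, ?_⟩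
  constructor
  · rintro ⟨h1, h2⟩
    rw [hE] at h1
    rw [hvw] at h2
    have hteq : t = 1 := by nlinarith
    have hny : ‖y‖ = 1 := by nlinarith
    refine ⟨?_, hny⟩
    have : (2 - t) ≠ 0 := by rw [hteq]; norm_num
    exact (mul_eq_zero.mp h1).resolve_left this
  · rintro ⟨h1, h2⟩
    have hteq : t = 1 := by rw [ht, h2]; norm_num
    rw [hE, hvw, h1, hteq]
    norm_num
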